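/- For any graph G with m edges, b(G) ≤ (m/2)·γ(G), where b(G) is the l₁-smoothing minimum and γ(G) the l_∞-smoothing minimum. -/
import Mathlib


open Finset SimpleGraph

/-- `max_{uv ∈ E(G)} |x_u - x_v|` (as a real supremum over adjacent pairs). -/
noncomputable def edgeSup {V : Type*} (G : SimpleGraph V) (x : V → ℝ) : ℝ :=
  ⨆ p : {p : V × V // G.Adj p.1 p.2}, |x p.1.1 - x p.1.2|

/-- The `l_∞`-smoothing parameter `γ(G)`. -/
noncomputable def gamma {V : Type*} [Fintype V] (G : SimpleGraph V) : ℝ :=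
  sInf {y | ∃ x : V → ℝ, (∑ v, x v) = 0 ∧ (⨆ v, |x v|) = 1 ∧ y = edgeSup G x}

/-- Transmission of a vertex: sum of graph distances to all vertices. -/
noncomputable def transmission {V : Type*} [Fintype V] (G : SimpleGraph V) (u : V) : ℕ :=
  ∑ v, G.dist u v

/-- `∑_{uv ∈ E(G)} |x_u - x_v|`, each edge counted once. -/
noncomputable def edgeAbsSum {V : Type*} [Fintype V] (G : SimpleGraph V)
    [DecidableRel G.Adj] (x : V → ℝ) : ℝ :=
  (∑ u, ∑ v, if G.Adj u v then |x u - x v| else 0) / 2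

/-- The `l₁`-smoothing parameter `b(G)`. -/
noncomputable def bval {V : Type*} [Fintype V] (G : SimpleGraph V)
    [DecidableRel G.Adj] : ℝ :=
  sInf {y | ∃ x : V → ℝ, (∑ v, x v) = 0 ∧ (∑ v, |x v|) = 1 ∧ y = edgeAbsSum G x}

lemma edgeAbsSum_nonneg {V : Type*} [Fintype V] (G : SimpleGraph V)
    [DecidableRel G.Adj] (x : V → ℝ) : 0 ≤ edgeAbsSum G x := by
  unfold edgeAbsSum
  apply div_nonneg _ (by norm_num)
  refine Finset.sum_nonneg fun u _ => Finset.sum_nonneg fun v _ => ?_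
  split <;> positivity

lemma edgeSup_nonneg {V : Type*} (G : SimpleGraph V) (x : V → ℝ) :
    0 ≤ edgeSup G x := by
  unfold edgeSup
  exact Real.iSup_nonneg fun p => abs_nonneg _

/-- Main step: for any admissible vector for γ, bval is bounded. -/
lemma key_step {V : Type*} [Fintype V] [DecidableEq V] (G : SimpleGraph V)
    [DecidableRel G.Adj] (hn : 2 ≤ Fintype.card V) (x : V → ℝ)
    (hsum : (∑ v, x v) = 0) (hsup : (⨆ v, |x v|) = 1) :
    bval G ≤ ((G.edgeFinset.card : ℝ) / 2) * edgeSup G x := by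
  have hVne : Nonempty V := Fintype.card_pos_iff.mp (by omega)
  set S : ℝ := ∑ v, |x v| with hS
  obtain ⟨a, ha⟩ := exists_eq_ciSup_of_finite (f := fun v => |x v|)
  rw [hsup] at ha
  have hP : S = 2 * ∑ v, max (x v) 0 := by
    have h1 : ∑ v, |x v| = ∑ v, (2 * max (x v) 0 - x v) :=
      Finset.sum_congr rfl fun v _ => by
        rcases le_total 0 (x v) with h | h
        · rw [abs_of_nonneg h, max_eq_left h]; ring
        · rw [abs_of_nonpos h, max_eq_right h]; ring
    rw [hS, h1, Finset.sum_sub_distrib, ← Finset.mul_sum, hsum, sub_zero]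
  have hN : S = 2 * ∑ v, max (-x v) 0 := by
    have h1 : ∑ v, |x v| = ∑ v, (2 * max (-x v) 0 + x v) :=
      Finset.sum_congr rfl fun v _ => by
        rcases le_total 0 (x v) with h | h
        · rw [abs_of_nonneg h, max_eq_right (by linarith)]; ring
        · rw [abs_of_nonpos h, max_eq_left (by linarith)]; ring
    rw [hS, h1, Finset.sum_add_distrib, ← Finset.mul_sum, hsum, add_zero]
  have hS2 : 2 ≤ S := by
    rcases (abs_eq (by norm_num : (0:ℝ) ≤ 1)).mp ha with h1 | h1
    · rw [hP]
      have : (1:ℝ) ≤ ∑ v, max (x v) 0 := by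
        calc (1:ℝ) = max (x a) 0 := by rw [h1]; norm_num
        _ ≤ _ := Finset.single_le_sum (f := fun v => max (x v) 0)
            (fun v _ => le_max_right _ _) (Finset.mem_univ a)
      linarith
    · rw [hN]
      have : (1:ℝ) ≤ ∑ v, max (-x v) 0 := by
        calc (1:ℝ) = max (-x a) 0 := by rw [h1]; norm_num
        _ ≤ _ := Finset.single_le_sum (f := fun v => max (-x v) 0)
            (fun v _ => le_max_right _ _) (Finset.mem_univ a)
      linarith
  have hSpos : 0 < S := by linarith
  set y : V → ℝ := fun v => x v / S with hy
  have hysum : (∑ v, y v) = 0 := by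
    simp only [hy, ← Finset.sum_div, hsum, zero_div]
  have hyabs : (∑ v, |y v|) = 1 := by
    simp only [hy, abs_div, abs_of_pos hSpos, ← Finset.sum_div, ← hS]
    field_simp
  have hbd : bval G ≤ edgeAbsSum G y :=
    csInf_le ⟨0, fun r ⟨z, _, _, hz⟩ => hz ▸ edgeAbsSum_nonneg G z⟩
      ⟨y, hysum, hyabs, rfl⟩
  have hnum : (∑ u, ∑ v, if G.Adj u v then |y u - y v| else 0)
      = (∑ u, ∑ v, if G.Adj u v then |x u - x v| else 0) / S := by
    rw [Finset.sum_div]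
    refine Finset.sum_congr rfl fun u _ => ?_
    rw [Finset.sum_div]
    refine Finset.sum_congr rfl fun v _ => ?_
    split
    · rw [hy]; simp only; rw [div_sub_div_same, abs_div, abs_of_pos hSpos]
    · simp
  have heq : edgeAbsSum G y = edgeAbsSum G x / S := by
    unfold edgeAbsSum
    rw [hnum, div_div, div_div, mul_comm]
  set c : ℝ := edgeSup G x with hc
  have hedge : ∀ u v, G.Adj u v → |x u - x v| ≤ c := by
    intro u v huv
    have h := le_ciSup (f := fun p : {p : V × V // G.Adj p.1 p.2} => |x p.1.1 - x p.1.2|)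
      (Set.Finite.bddAbove (Set.finite_range _)) ⟨(u, v), huv⟩
    rw [hc]; exact h
  have hcnn : 0 ≤ c := edgeSup_nonneg G x
  have hdeg : ∀ u : V, (∑ v, if G.Adj u v then c else 0) = (G.degree u : ℝ) * c := by
    intro u
    rw [← Finset.sum_filter, Finset.sum_const, ← neighborFinset_eq_filter, nsmul_eq_mul]
    rfl
  have hm : edgeAbsSum G x ≤ (G.edgeFinset.card : ℝ) * c := by
    unfold edgeAbsSum
    rw [div_le_iff₀ (by norm_num : (0:ℝ) < 2)]
    calc (∑ u, ∑ v, if G.Adj u v then |x u - x v| else 0)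
        ≤ ∑ u, ∑ v, if G.Adj u v then c else 0 := by
          refine Finset.sum_le_sum fun u _ => Finset.sum_le_sum fun v _ => ?_
          split
          · exact hedge u v (by assumption)
          · exact le_refl 0
      _ = ∑ u : V, (G.degree u : ℝ) * c := Finset.sum_congr rfl fun u _ => hdeg u
      _ = ((∑ u, G.degree u : ℕ) : ℝ) * c := by
          rw [← Finset.sum_mul]; push_cast; ring
      _ = (G.edgeFinset.card : ℝ) * c * 2 := by
          rw [G.sum_degrees_eq_twice_card_edges]; push_cast; ring
  calc bval G ≤ edgeAbsSum G y := hbd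
    _ = edgeAbsSum G x / S := heq
    _ ≤ edgeAbsSum G x / 2 :=
        div_le_div_of_nonneg_left (edgeAbsSum_nonneg G x) (by norm_num) hS2
    _ ≤ ((G.edgeFinset.card : ℝ) * c) / 2 := by linarith
    _ = ((G.edgeFinset.card : ℝ) / 2) * c := by ring

theorem stmt12 {V : Type*} [Fintype V] [DecidableEq V] (G : SimpleGraph V)
    [DecidableRel G.Adj] (hn : 2 ≤ Fintype.card V) :
    bval G ≤ ((G.edgeFinset.card : ℝ) / 2) * gamma G := by
  obtain ⟨a, b, hab⟩ := Fintype.exists_pair_of_one_lt_card (α := V) (by omega)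
  set x0 : V → ℝ := fun v => if v = a then 1 else if v = b then -1 else 0 with hx0
  have hsum0 : (∑ v, x0 v) = 0 := by
    have hpt : ∀ v, x0 v = (if v = a then (1:ℝ) else 0) + (if v = b then (-1:ℝ) else 0) := by
      intro v
      by_cases h1 : v = a
      · subst h1; simp [hx0, hab, Ne.symm hab]
      · by_cases h2 : v = b
        · subst h2; simp [hx0, h1]
        · simp [hx0, h1, h2]
    rw [Finset.sum_congr rfl fun v _ => hpt v, Finset.sum_add_distrib,
      Finset.sum_ite_eq', Finset.sum_ite_eq']
    simp
  have hVne : Nonempty V := ⟨a⟩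
  have hsup0 : (⨆ v, |x0 v|) = 1 := by
    apply le_antisymm
    · refine ciSup_le fun v => ?_
      by_cases h1 : v = a <;> by_cases h2 : v = b <;> simp [hx0, h1, h2, Ne.symm hab]
    · have h := le_ciSup (f := fun v => |x0 v|)
        (Set.Finite.bddAbove (Set.finite_range _)) a
      simpa [hx0] using h
  have hne : Set.Nonempty {y | ∃ x : V → ℝ, (∑ v, x v) = 0 ∧ (⨆ v, |x v|) = 1 ∧
      y = edgeSup G x} := ⟨edgeSup G x0, x0, hsum0, hsup0, rfl⟩
  have key : ∀ yv ∈ {y | ∃ x : V → ℝ, (∑ v, x v) = 0 ∧ (⨆ v, |x v|) = 1 ∧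
      y = edgeSup G x}, bval G ≤ ((G.edgeFinset.card : ℝ) / 2) * yv := by
    rintro yv ⟨x, h1, h2, rfl⟩
    exact key_step G hn x h1 h2
  set m2 : ℝ := (G.edgeFinset.card : ℝ) / 2 with hm2
  rcases eq_or_lt_of_le (by positivity : (0:ℝ) ≤ m2) with h0 | hpos
  · obtain ⟨y0, hy0⟩ := hne
    have hb := key y0 hy0
    rw [← h0] at hb ⊢
    simpa using hb
  · have hdiv : bval G / m2 ≤ gamma G := by
      refine le_csInf hne fun yv hyv => ?_
      rw [div_le_iff₀ hpos]
      calc bval G ≤ m2 * yv := key yv hyv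
        _ = yv * m2 := mul_comm _ _
    rw [div_le_iff₀ hpos] at hdiv
    calc bval G ≤ gamma G * m2 := hdiv
      _ = m2 * gamma G := mul_comm _ _
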